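/- arXiv:math/0507303 — 2 statements merged into one kernel-verified Lean document; each statement's English description precedes it below -/
import Mathlib

section
/- The coefficients A^{(1)}, A^{(2)}, B, C of the two-sided conditional second moment satisfy the system: (1) 1+ρ^{2j}(1+q) = A^{(1)}(2+q) + A^{(2)}(1+ρ^{2(j+k)}(1+q)) + Bρ^{j+k}(2+q) + 1 - A^{(1)} - A^{(2)} - ρ^{j+k}B; (2) 1+ρ^{2k}(1+q) = A^{(1)}(1+ρ^{2(j+k)}(1+q)) + A^{(2)}(2+q) + Bρ^{j+k}(2+q) + 1 - A^{(1)} - A^{(2)} - ρ^{j+k}B; (3) ρ^{j+k}(2+q) = A^{(1)}ρ^{j+k}(2+q) + A^{(2)}ρ^{j+k}(2+q) + B(1+ρ^{2(j+k)}(1+q)) + ρ^{j+k}(1 - A^{(1)} - A^{(2)} - ρ^{j+k}B), where A^{(1)} = ρ^{2j}(1-ρ^{2k})(1-qρ^{2k})/((1-qρ^{2(j+k)})(1-ρ^{2(j+k)})), A^{(2)} = ρ^{2k}(1-ρ^{2j})(1-qρ^{2j})/((1-qρ^{2(j+k)})(1-ρ^{2(j+k)})), B = (q+1)ρ^{j+k}(1-ρ^{2j})(1-ρ^{2k})/((1-qρ^{2(j+k)})(1-ρ^{2(j+k)})).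 -/
/-- The explicit coefficients A⁽¹⁾, A⁽²⁾, B of the two-sided conditional second
moment of a 1TSP solve the linear system of moment equations. -/
theorem coefficients_solve_moment_system (ρ q : ℝ) (j k : ℕ)
    (hρ0 : 0 < |ρ|) (hρ1 : |ρ| < 1) (hq : -1 < q) (hq1 : q ≤ 1)
    (hj : 1 ≤ j) (hk : 1 ≤ k) :
    (fun A1 A2 B =>
      (1 + ρ ^ (2 * j) * (1 + q) =
          A1 * (2 + q) + A2 * (1 + ρ ^ (2 * (j + k)) * (1 + q)) +
            B * ρ ^ (j + k) * (2 + q) + 1 - A1 - A2 - ρ ^ (j + k) * B) ∧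
      (1 + ρ ^ (2 * k) * (1 + q) =
          A1 * (1 + ρ ^ (2 * (j + k)) * (1 + q)) + A2 * (2 + q) +
            B * ρ ^ (j + k) * (2 + q) + 1 - A1 - A2 - ρ ^ (j + k) * B) ∧
      (ρ ^ (j + k) * (2 + q) =
          A1 * ρ ^ (j + k) * (2 + q) + A2 * ρ ^ (j + k) * (2 + q) +
            B * (1 + ρ ^ (2 * (j + k)) * (1 + q)) +
            ρ ^ (j + k) * (1 - A1 - A2 - ρ ^ (j + k) * B)))
      (ρ ^ (2 * j) * (1 - ρ ^ (2 * k)) * (1 - q * ρ ^ (2 * k)) /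
        ((1 - q * ρ ^ (2 * (j + k))) * (1 - ρ ^ (2 * (j + k)))))
      (ρ ^ (2 * k) * (1 - ρ ^ (2 * j)) * (1 - q * ρ ^ (2 * j)) /
        ((1 - q * ρ ^ (2 * (j + k))) * (1 - ρ ^ (2 * (j + k)))))
      ((q + 1) * ρ ^ (j + k) * (1 - ρ ^ (2 * j)) * (1 - ρ ^ (2 * k)) /
        ((1 - q * ρ ^ (2 * (j + k))) * (1 - ρ ^ (2 * (j + k))))) := by
  have hpow : |ρ ^ (2 * (j + k))| < 1 := by
    rw [abs_pow]
    exact pow_lt_one₀ (abs_nonneg ρ) hρ1 (by positivity)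
  have h1 : 1 - ρ ^ (2 * (j + k)) ≠ 0 := by
    have h := abs_lt.mp hpow
    intro h0; linarith [h.2]
  have h2 : 1 - q * ρ ^ (2 * (j + k)) ≠ 0 := by
    have hq' : |q| ≤ 1 := abs_le.mpr ⟨le_of_lt hq, hq1⟩
    have : |q * ρ ^ (2 * (j + k))| < 1 := by
      rw [abs_mul]
      calc |q| * |ρ ^ (2 * (j + k))| ≤ 1 * |ρ ^ (2 * (j + k))| := by
            exact mul_le_mul_of_nonneg_right hq' (abs_nonneg _)
        _ = |ρ ^ (2 * (j + k))| := one_mul _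
        _ < 1 := hpow
    have h := abs_lt.mp this
    intro h0; linarith [h.2]
  refine ⟨?_, ?_, ?_⟩ <;> (field_simp; ring)
end

section
/- For |q| < 1, the q-Hermite polynomials satisfy the sup-bound max_{x ∈ S(q)} |H_n(x|q)| ≤ W_n(q)/(1-q)^{n/2}, where W_n(q) = Σ_{i=0}^n [n choose i]_q is the sum of Gaussian binomial coefficients and S(q) = [-2/√(1-q), 2/√(1-q)]. -/
noncomputable section

/-- The q-integer [n]_q = 1 + q + ⋯ + q^{n-1}. -/
def qInt (q : ℝ) (n : ℕ) : ℝ := ∑ i ∈ Finset.range n, q ^ i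

/-- The q-factorial [n]_q! = ∏_{i=1}^n [i]_q. -/
def qFactorial (q : ℝ) : ℕ → ℝ
  | 0 => 1
  | n + 1 => qFactorial q n * qInt q (n + 1)

/-- The Gaussian binomial coefficient [n choose k]_q. -/
def qBinom (q : ℝ) (n k : ℕ) : ℝ := qFactorial q n / (qFactorial q k * qFactorial q (n - k))

/-- W_n(q) = Σ_{i=0}^n [n choose i]_q. -/
def W (q : ℝ) (n : ℕ) : ℝ := ∑ i ∈ Finset.range (n + 1), qBinom q n i

/-- The q-Hermite polynomials. -/
def qHermite (q : ℝ) : ℕ → ℝ → ℝ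
  | 0, _ => 1
  | 1, x => x
  | n + 2, x => x * qHermite q (n + 1) x - qInt q (n + 1) * qHermite q n x



lemma one_sub_pow_eq (q : ℝ) (m : ℕ) : 1 - q ^ m = (1 - q) * qInt q m := by
  have := geom_sum_mul q m
  unfold qInt
  linear_combination this

lemma qInt_pos {q : ℝ} (hq : |q| < 1) {n : ℕ} (hn : 0 < n) : 0 < qInt q n := by
  have hq1 : q < 1 := lt_of_le_of_lt (le_abs_self q) hq
  have h2 : q ^ n < 1 := by
    calc q ^ n ≤ |q ^ n| := le_abs_self _
    _ = |q| ^ n := by rw [abs_pow]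
    _ < 1 := pow_lt_one₀ (abs_nonneg q) hq hn.ne'
  have := one_sub_pow_eq q n
  nlinarith
  
lemma qFactorial_pos {q : ℝ} (hq : |q| < 1) (n : ℕ) : 0 < qFactorial q n := by
  induction n with
  | zero => norm_num [qFactorial]
  | succ n ih => exact mul_pos ih (qInt_pos hq n.succ_pos)

lemma qBinom_nonneg {q : ℝ} (hq : |q| < 1) (n k : ℕ) : 0 ≤ qBinom q n k :=
  le_of_lt (div_pos (qFactorial_pos hq n) (mul_pos (qFactorial_pos hq k) (qFactorial_pos hq _)))

lemma qBinom_zero {q : ℝ} (hq : |q| < 1) (n : ℕ) : qBinom q n 0 = 1 := by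
  unfold qBinom
  simp [qFactorial]
  exact (qFactorial_pos hq n).ne'

lemma qBinom_self {q : ℝ} (hq : |q| < 1) (n : ℕ) : qBinom q n n = 1 := by
  unfold qBinom
  simp [qFactorial]
  exact (qFactorial_pos hq n).ne'

lemma qInt_add (q : ℝ) (a b : ℕ) : qInt q (a + b) = qInt q a + q ^ a * qInt q b := by
  unfold qInt
  rw [Finset.sum_range_add, Finset.mul_sum]
  congr 1
  exact Finset.sum_congr rfl fun i _ => by rw [pow_add]

lemma qBinom_pascal {q : ℝ} (hq : |q| < 1) {n k : ℕ} (hk : k < n) :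
    qBinom q (n+1) (k+1) = qBinom q n (k+1) + q ^ (n-k) * qBinom q n k := by
  have h1 : n + 1 - (k+1) = n - k := by omega
  have h2 : n - (k+1) = n - k - 1 := by omega
  have h3 : n - k = (n - k - 1) + 1 := by omega
  have h4 : qFactorial q (n - k) = qFactorial q (n-k-1) * qInt q (n-k) := by
    rw [h3]; rfl
  have h5 : qFactorial q (n+1) = qFactorial q n * qInt q (n+1) := rfl
  have h6 : qFactorial q (k+1) = qFactorial q k * qInt q (k+1) := rfl
  have key : qInt q (n+1) = qInt q (n-k) + q ^ (n-k) * qInt q (k+1) := by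
    have : n + 1 = (n-k) + (k+1) := by omega
    rw [this, qInt_add]
  have pk : (0:ℝ) < qFactorial q k := qFactorial_pos hq k
  have pn : (0:ℝ) < qFactorial q n := qFactorial_pos hq n
  have pnk1 : (0:ℝ) < qFactorial q (n-k-1) := qFactorial_pos hq _
  have ik : (0:ℝ) < qInt q (k+1) := qInt_pos hq k.succ_pos
  have ink : (0:ℝ) < qInt q (n-k) := qInt_pos hq (by omega)
  unfold qBinom
  rw [h1, h2, h4, h5, h6]
  field_simp
  linear_combination key

lemma qBinom_shift {q : ℝ} (hq : |q| < 1) {n k : ℕ} (hk : k ≤ n) :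
    qInt q (n+1-k) * qBinom q (n+1) k = qInt q (n+1) * qBinom q n k := by
  have h1 : n + 1 - k = (n - k) + 1 := by omega
  have h4 : qFactorial q (n+1-k) = qFactorial q (n-k) * qInt q (n+1-k) := by
    rw [h1]; rfl
  have h5 : qFactorial q (n+1) = qFactorial q n * qInt q (n+1) := rfl
  have pk : (0:ℝ) < qFactorial q k := qFactorial_pos hq k
  have pnk : (0:ℝ) < qFactorial q (n-k) := qFactorial_pos hq _
  have ink : (0:ℝ) < qInt q (n+1-k) := qInt_pos hq (by omega)
  unfold qBinom
  rw [h4, h5]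
  field_simp

def E (θ : ℝ) (m : ℂ) : ℂ := Complex.exp (m * θ * Complex.I)

lemma E_mul (θ : ℝ) (a b : ℂ) : E θ a * E θ b = E θ (a + b) := by
  rw [E, E, E, ← Complex.exp_add]; ring_nf

def P (q θ : ℝ) (n : ℕ) : ℂ :=
  ∑ k ∈ Finset.range (n+1), (qBinom q n k : ℂ) * E θ ((n:ℂ) - 2*k)

lemma P_rec {q : ℝ} (hq : |q| < 1) (θ : ℝ) (n : ℕ) :
    P q θ (n+2) = (E θ 1 + E θ (-1)) * P q θ (n+1) - ((1:ℂ) - (q:ℂ)^(n+1)) * P q θ n := by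
  have hA : P q θ (n+2)
      = (∑ k ∈ Finset.range (n+2), (qBinom q (n+1) k : ℂ) * E θ ((n:ℂ) + 2 - 2*k))
      + ∑ k ∈ Finset.range (n+2), (q:ℂ)^(n+1-k) * (qBinom q (n+1) k : ℂ) * E θ ((n:ℂ) - 2*k) := by
    rw [P, Finset.sum_range_succ' _ (n+2), Finset.sum_range_succ _ (n+1),
        Finset.sum_range_succ' _ (n+1), Finset.sum_range_succ _ (n+1)]
    have e1 : ∀ k ∈ Finset.range (n+1),
        (qBinom q (n+2) (k+1) : ℂ) * E θ ((↑(n+2):ℂ) - 2*(↑(k+1))) =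
        (qBinom q (n+1) (k+1) : ℂ) * E θ ((n:ℂ) + 2 - 2*(↑(k+1)))
          + (q:ℂ)^(n+1-k) * (qBinom q (n+1) k : ℂ) * E θ ((n:ℂ) - 2*k) := by
      intro k hk
      rw [Finset.mem_range] at hk
      have hp := qBinom_pascal hq (n := n+1) (k := k) hk
      have harg1 : ((↑(n+2):ℂ) - 2*(↑(k+1))) = ((n:ℂ) + 2 - 2*(↑(k+1))) := by push_cast; ring
      have harg2 : ((n:ℂ) + 2 - 2*(↑(k+1))) = ((n:ℂ) - 2*k) := by push_cast; ring
      rw [harg1, harg2, hp]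
      push_cast
      ring
    rw [Finset.sum_congr rfl e1, Finset.sum_add_distrib]
    rw [qBinom_self hq, qBinom_zero hq, qBinom_zero hq, qBinom_self hq]
    have b1 : E θ ((↑(n+2):ℂ) - 2*(↑(n+1+1):ℂ)) = E θ ((n:ℂ) - 2*(↑(n+1):ℂ)) := by
      congr 1; push_cast; ring
    have b2 : E θ ((↑(n+2):ℂ) - 2*(↑(0:ℕ):ℂ)) = E θ ((n:ℂ) + 2 - 2*(↑(0:ℕ):ℂ)) := by
      congr 1; push_cast; ring
    rw [b1, b2]
    have e2 : ∀ k ∈ Finset.range (n+1),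
        (qBinom q (n+1) (k+1) : ℂ) * E θ ((n:ℂ) + 2 - 2*(↑(k+1))) =
        (qBinom q (n+1) (k+1) : ℂ) * E θ ((n:ℂ) - 2*k) := by
      intro k _
      congr 1
      congr 1
      push_cast; ring
    rw [Finset.sum_congr rfl e2]
    simp only [Nat.sub_self, pow_zero]
    ring
  have hC : (E θ 1 + E θ (-1)) * P q θ (n+1)
      = (∑ k ∈ Finset.range (n+2), (qBinom q (n+1) k : ℂ) * E θ ((n:ℂ) + 2 - 2*k))
      + ∑ k ∈ Finset.range (n+2), (qBinom q (n+1) k : ℂ) * E θ ((n:ℂ) - 2*k) := by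
    rw [P, add_mul, Finset.mul_sum, Finset.mul_sum, ← Finset.sum_add_distrib,
        ← Finset.sum_add_distrib]
    refine Finset.sum_congr rfl fun k _ => ?_
    rw [mul_comm (E θ 1), mul_comm (E θ (-1)), mul_assoc, mul_assoc, E_mul, E_mul]
    have a1 : ((↑(n+1):ℂ) - 2*k + 1) = ((n:ℂ) + 2 - 2*k) := by push_cast; ring
    have a2 : ((↑(n+1):ℂ) - 2*k + (-1)) = ((n:ℂ) - 2*k) := by push_cast; ring
    rw [a1, a2]
  have hB : ∑ k ∈ Finset.range (n+2), ((1:ℂ) - (q:ℂ)^(n+1-k)) * (qBinom q (n+1) k : ℂ) * E θ ((n:ℂ) - 2*k)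
      = ((1:ℂ) - (q:ℂ)^(n+1)) * P q θ n := by
    rw [Finset.sum_range_succ]
    have last0 : ((1:ℂ) - (q:ℂ)^(n+1-(n+1))) = 0 := by norm_num
    rw [last0]
    rw [P, Finset.mul_sum]
    have e3 : ∀ k ∈ Finset.range (n+1),
        ((1:ℂ) - (q:ℂ)^(n+1-k)) * (qBinom q (n+1) k : ℂ) * E θ ((n:ℂ) - 2*k)
        = ((1:ℂ) - (q:ℂ)^(n+1)) * ((qBinom q n k : ℂ) * E θ ((n:ℂ) - 2*k)) := by
      intro k hk
      rw [Finset.mem_range] at hk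
      have hk' : k ≤ n := Nat.lt_succ_iff.mp hk
      have key : (1 - q^(n+1-k)) * qBinom q (n+1) k = (1 - q^(n+1)) * qBinom q n k := by
        rw [one_sub_pow_eq, one_sub_pow_eq, mul_assoc, mul_assoc, qBinom_shift hq hk']
      have keyC : ((1:ℂ) - (q:ℂ)^(n+1-k)) * (qBinom q (n+1) k : ℂ)
          = ((1:ℂ) - (q:ℂ)^(n+1)) * (qBinom q n k : ℂ) := by
        exact_mod_cast congrArg (Complex.ofReal) key
      rw [← mul_assoc, keyC]
    rw [Finset.sum_congr rfl e3]
    ring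
  have expand : ∑ k ∈ Finset.range (n+2), ((1:ℂ) - (q:ℂ)^(n+1-k)) * (qBinom q (n+1) k : ℂ) * E θ ((n:ℂ) - 2*k)
      = (∑ k ∈ Finset.range (n+2), (qBinom q (n+1) k : ℂ) * E θ ((n:ℂ) - 2*k))
      - ∑ k ∈ Finset.range (n+2), (q:ℂ)^(n+1-k) * (qBinom q (n+1) k : ℂ) * E θ ((n:ℂ) - 2*k) := by
    rw [← Finset.sum_sub_distrib]
    exact Finset.sum_congr rfl fun k _ => by ring
  rw [expand] at hB
  linear_combination hA - hC - hB

lemma two_cos_eq (θ : ℝ) : ((2 * Real.cos θ : ℝ) : ℂ) = E θ 1 + E θ (-1) := by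
  rw [E, E, one_mul,
    show ((-1:ℂ)) * (θ:ℂ) * Complex.I = (-(θ:ℂ)) * Complex.I by ring,
    Complex.exp_mul_I, Complex.exp_mul_I, Complex.cos_neg, Complex.sin_neg]
  push_cast [Complex.ofReal_cos]
  ring

lemma qHermite_eq_P {q : ℝ} (hq : |q| < 1) (θ : ℝ) (n : ℕ) :
    ((qHermite q n (2 * Real.cos θ / Real.sqrt (1-q)) : ℝ) : ℂ)
      * ((Real.sqrt (1-q) : ℝ) : ℂ)^n = P q θ n := by
  have hq1 : q < 1 := lt_of_le_of_lt (le_abs_self q) hq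
  have h1q : (0:ℝ) < 1 - q := by linarith
  have hs : 0 < Real.sqrt (1-q) := Real.sqrt_pos.mpr h1q
  set s := Real.sqrt (1-q) with hsdef
  set x := 2 * Real.cos θ / s with hxdef
  have hxs : x * s = 2 * Real.cos θ := div_mul_cancel₀ _ hs.ne'
  induction n using Nat.twoStepInduction with
  | zero =>
    show ((qHermite q 0 x : ℝ) : ℂ) * (s:ℂ)^0 = P q θ 0
    have : qHermite q 0 x = 1 := rfl
    rw [this, P]
    simp [qBinom_zero hq, E]
  | one =>
    show ((qHermite q 1 x : ℝ) : ℂ) * (s:ℂ)^1 = P q θ 1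
    have h1 : qHermite q 1 x = x := rfl
    rw [h1, P, Finset.sum_range_succ, Finset.sum_range_succ, Finset.sum_range_zero,
      qBinom_zero hq, qBinom_self hq]
    have a1 : ((1:ℕ):ℂ) - 2 * ((0:ℕ):ℂ) = 1 := by norm_num
    have a2 : ((1:ℕ):ℂ) - 2 * ((1:ℕ):ℂ) = -1 := by norm_num
    rw [a1, a2]
    rw [pow_one, ← Complex.ofReal_mul, hxs, two_cos_eq]
    push_cast
    ring
  | more n ih1 ih2 =>
    have hrec : qHermite q (n+2) x = x * qHermite q (n+1) x - qInt q (n+1) * qHermite q n x := rfl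
    have hs2 : qInt q (n+1) * s^2 = 1 - q^(n+1) := by
      rw [hsdef, Real.sq_sqrt h1q.le, one_sub_pow_eq]; ring
    calc ((qHermite q (n+2) x : ℝ) : ℂ) * (s:ℂ)^(n+2)
        = ((x * s : ℝ) : ℂ) * (((qHermite q (n+1) x : ℝ) : ℂ) * (s:ℂ)^(n+1))
          - ((qInt q (n+1) * s^2 : ℝ) : ℂ) * (((qHermite q n x : ℝ) : ℂ) * (s:ℂ)^n) := by
          rw [hrec]; push_cast; ring
      _ = (E θ 1 + E θ (-1)) * P q θ (n+1) - ((1:ℂ) - (q:ℂ)^(n+1)) * P q θ n := by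
          rw [ih2, ih1, hxs, two_cos_eq, hs2]; push_cast; ring
      _ = P q θ (n+2) := (P_rec hq θ (n+2-2)).symm


/-- Sup-bound for q-Hermite polynomials on the support S(q):
|H_n(x|q)| ≤ W_n(q)/(1-q)^{n/2} for x ∈ [-2/√(1-q), 2/√(1-q)]. -/
theorem qHermite_sup_bound (q : ℝ) (hq : |q| < 1) (n : ℕ) (x : ℝ)
    (hx : x ∈ Set.Icc (-(2 / Real.sqrt (1 - q))) (2 / Real.sqrt (1 - q))) :
    |qHermite q n x| ≤ W q n / (1 - q) ^ ((n : ℝ) / 2) := by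
  have hq1 : q < 1 := lt_of_le_of_lt (le_abs_self q) hq
  have h1q : (0:ℝ) < 1 - q := by linarith
  have hs : 0 < Real.sqrt (1-q) := Real.sqrt_pos.mpr h1q
  set s := Real.sqrt (1-q) with hsdef
  obtain ⟨hx1, hx2⟩ := hx
  have h2s : (2/s) * s = 2 := div_mul_cancel₀ _ hs.ne'
  have hb1 : -1 ≤ x * s / 2 := by nlinarith
  have hb2 : x * s / 2 ≤ 1 := by nlinarith
  set θ := Real.arccos (x * s / 2) with hθ
  have hcos : Real.cos θ = x * s / 2 := Real.cos_arccos hb1 hb2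
  have hxeq : 2 * Real.cos θ / s = x := by
    rw [hcos]; field_simp
  have key := qHermite_eq_P hq θ n
  rw [hxeq] at key
  have hPle : ‖P q θ n‖ ≤ W q n := by
    rw [P, W]
    refine le_trans (norm_sum_le _ _) (Finset.sum_le_sum fun k _ => ?_)
    rw [norm_mul, Complex.norm_real, Real.norm_eq_abs, abs_of_nonneg (qBinom_nonneg hq n k)]
    have hE : ‖E θ ((n:ℂ) - 2*k)‖ = 1 := by
      rw [E, show ((n:ℂ) - 2*(k:ℂ)) * (θ:ℂ) * Complex.I
          = ((((n:ℝ) - 2*k) * θ : ℝ) : ℂ) * Complex.I by push_cast; ring]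
      exact Complex.norm_exp_ofReal_mul_I _
    rw [hE, mul_one]
  have habs : |qHermite q n x| * s^n = ‖P q θ n‖ := by
    rw [← key, norm_mul, Complex.norm_real, Real.norm_eq_abs, norm_pow, Complex.norm_real, Real.norm_eq_abs, abs_of_nonneg hs.le]
  have hsn : (1-q) ^ ((n:ℝ)/2) = s^n := by
    rw [hsdef, Real.sqrt_eq_rpow, ← Real.rpow_natCast ((1-q) ^ ((1:ℝ)/2)) n,
      ← Real.rpow_mul h1q.le]
    congr 1
    ring
  rw [hsn, le_div_iff₀ (pow_pos hs n), habs]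
  exact hPle
end
end
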